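/- Let A = (A₁,…,A_n) be a tuple of N×N Hermitian matrices with entries a_{k,ij}, let 1 ≤ M ≤ N, and let σ be a uniformly random N×N permutation matrix. Let Π^{(N,M)} denote (N/M)^{1/2} times the map taking the upper-left M×M minor of each matrix, and ‖B‖²_{M_N(ℂ)ⁿ_sa} := (1/N)Σ_k Tr(B_k B_k*). Then 𝔼_σ ‖Π^{(N,M)}(σAσ^{−1})‖²_{M_M(ℂ)ⁿ_sa} = (1/N)·(N(M−1)/(M(N−1)))·Σ_k Σ_{i≠j} |a_{k,ij}|² + (1/N)·(N/M)·Σ_k Σ_i |a_{k,ii}|², and consequently 𝔼_σ ‖Π^{(N,M)}(σAσ^{−1})‖² ≤ ‖A‖² + (N/M)·‖diag(A)‖². -/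

import Mathlib

open scoped BigOperators

open Finset

lemma exists_perm_two (N : ℕ) (i j x y : Fin N) (hij : i ≠ j) (hxy : x ≠ y) :
    ∃ π : Equiv.Perm (Fin N), π i = x ∧ π j = y := by
  refine ⟨Equiv.swap (Equiv.swap i x j) y * Equiv.swap i x, ?_, ?_⟩
  · have h1 : Equiv.swap i x j ≠ x := by
      intro h
      exact hij ((Equiv.swap i x).injective (by simp [h]))
    simp [Equiv.Perm.mul_apply, Equiv.swap_apply_of_ne_of_ne h1.symm hxy]
  · simp [Equiv.Perm.mul_apply]

lemma card_fiber_pair_const (N : ℕ) (i j x y : Fin N) (hij : i ≠ j) (hxy : x ≠ y) :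
    (univ.filter fun σ : Equiv.Perm (Fin N) => σ i = x ∧ σ j = y).card
      = (univ.filter fun σ : Equiv.Perm (Fin N) => σ i = i ∧ σ j = j).card := by
  obtain ⟨π, hπi, hπj⟩ := exists_perm_two N i j x y hij hxy
  apply Finset.card_nbij' (i := fun σ => π⁻¹ * σ) (j := fun σ => π * σ)
  · intro σ hσ
    simp only [Finset.mem_coe, mem_filter, mem_univ, true_and] at hσ ⊢
    constructor
    · rw [Equiv.Perm.mul_apply, hσ.1, ← hπi]; simp
    · rw [Equiv.Perm.mul_apply, hσ.2, ← hπj]; simp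
  · intro σ hσ
    simp only [Finset.mem_coe, mem_filter, mem_univ, true_and] at hσ ⊢
    exact ⟨by rw [Equiv.Perm.mul_apply, hσ.1, hπi], by rw [Equiv.Perm.mul_apply, hσ.2, hπj]⟩
  · intro σ _; simp [mul_assoc]
  · intro σ _; simp [mul_assoc]

lemma card_fiber_one_const (N : ℕ) (i x : Fin N) :
    (univ.filter fun σ : Equiv.Perm (Fin N) => σ i = x).card
      = (univ.filter fun σ : Equiv.Perm (Fin N) => σ i = i).card := by
  apply Finset.card_nbij' (i := fun σ => (Equiv.swap i x)⁻¹ * σ) (j := fun σ => Equiv.swap i x * σ)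
  · intro σ hσ
    simp only [Finset.mem_coe, mem_filter, mem_univ, true_and] at hσ ⊢
    rw [Equiv.Perm.mul_apply, hσ]
    simp
  · intro σ hσ
    simp only [Finset.mem_coe, mem_filter, mem_univ, true_and] at hσ ⊢
    rw [Equiv.Perm.mul_apply, hσ]
    simp
  · intro σ _; simp [mul_assoc]
  · intro σ _; simp [mul_assoc]

lemma sum_perm_one (N : ℕ) (i : Fin N) (f : Fin N → ℝ) :
    ∑ σ : Equiv.Perm (Fin N), f (σ i) = ((N - 1).factorial : ℝ) * ∑ x : Fin N, f x := by
  classical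
  have hfib : ∀ x : Fin N,
      (univ.filter (fun σ : Equiv.Perm (Fin N) => σ i = x)).card
        = (univ.filter (fun σ : Equiv.Perm (Fin N) => σ i = i)).card :=
    fun x => card_fiber_one_const N i x
  set c := (univ.filter (fun σ : Equiv.Perm (Fin N) => σ i = i)).card with hcdef
  have hmaps : ∀ σ : Equiv.Perm (Fin N), σ ∈ (univ : Finset (Equiv.Perm (Fin N))) →
      σ i ∈ (univ : Finset (Fin N)) := fun _ _ => mem_univ _
  have hsum : ∑ σ : Equiv.Perm (Fin N), f (σ i) = (c : ℝ) * ∑ x : Fin N, f x := by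
    rw [← Finset.sum_fiberwise_of_maps_to hmaps (fun σ => f (σ i))]
    rw [Finset.sum_congr rfl (fun x _ => ?_), ← Finset.mul_sum]
    rw [Finset.sum_congr rfl (fun σ hσ => ?_), Finset.sum_const, nsmul_eq_mul, hfib x]
    simp only [mem_filter, mem_univ, true_and] at hσ
    rw [hσ]
  have hcount : (N * c : ℕ) = Nat.factorial N := by
    have h2 := Finset.card_eq_sum_card_fiberwise hmaps
    rw [Finset.sum_congr rfl (fun x _ => hfib x), Finset.sum_const, smul_eq_mul] at h2
    simpa [Finset.card_univ, Fintype.card_perm] using h2.symm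
  have hN : 0 < N := i.pos
  have hfact : (N * c : ℕ) = N * (N - 1).factorial := by
    rw [hcount, ← Nat.mul_factorial_pred hN.ne']
  have : c = (N - 1).factorial := Nat.eq_of_mul_eq_mul_left hN hfact
  rw [hsum, this]

lemma sum_perm_two_aux' (N : ℕ) (i j : Fin N) (hij : i ≠ j) (f : Fin N → Fin N → ℝ)
    (c : ℕ)
    (hc : ∀ x y : Fin N, x ≠ y →
      (univ.filter fun σ : Equiv.Perm (Fin N) => σ i = x ∧ σ j = y).card = c) :
    ((N:ℝ) * (N:ℝ) - (N:ℝ)) * ∑ σ : Equiv.Perm (Fin N), f (σ i) (σ j)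
      = (Nat.factorial N : ℝ) * ∑ x : Fin N, ∑ y : Fin N, if x ≠ y then f x y else 0 := by
  classical
  set t : Finset (Fin N × Fin N) := univ.filter (fun p => p.1 ≠ p.2) with ht
  have hmaps : ∀ σ : Equiv.Perm (Fin N), σ ∈ (univ : Finset (Equiv.Perm (Fin N))) →
      (σ i, σ j) ∈ t := by
    intro σ _
    simp [ht, σ.injective.ne hij]
  have hfib : ∀ p ∈ t,
      (univ.filter (fun σ : Equiv.Perm (Fin N) => (σ i, σ j) = p)).card = c := by
    intro p hp
    simp only [ht, mem_filter, mem_univ, true_and] at hp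
    rw [← hc p.1 p.2 hp]
    apply congrArg Finset.card
    ext σ
    simp [Prod.ext_iff]
  have hsum : ∑ σ : Equiv.Perm (Fin N), f (σ i) (σ j)
      = (c : ℝ) * ∑ x : Fin N, ∑ y : Fin N, if x ≠ y then f x y else 0 := by
    rw [← Finset.sum_fiberwise_of_maps_to hmaps (fun σ => f (σ i) (σ j))]
    have : ∀ p ∈ t, ∑ σ ∈ univ.filter (fun σ : Equiv.Perm (Fin N) => (σ i, σ j) = p),
        f (σ i) (σ j) = (c : ℝ) * f p.1 p.2 := by
      intro p hp
      rw [Finset.sum_congr rfl (fun σ hσ => ?_), Finset.sum_const, nsmul_eq_mul, hfib p hp]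
      simp only [mem_filter, mem_univ, true_and] at hσ
      rw [← hσ]
    rw [Finset.sum_congr rfl this, ← Finset.mul_sum]
    congr 1
    rw [ht, Finset.sum_filter, ← Finset.sum_product']
    rfl
  have hcount : (t.card * c : ℕ) = Nat.factorial N := by
    have h2 := Finset.card_eq_sum_card_fiberwise hmaps
    rw [Finset.sum_congr rfl hfib, Finset.sum_const, smul_eq_mul] at h2
    rw [← h2]
    simp [Fintype.card_perm]
  have htcard : (t.card : ℝ) = (N:ℝ) * (N:ℝ) - (N:ℝ) := by
    have hteq : t = Finset.univ.offDiag := by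
      ext p; simp [ht, Finset.mem_offDiag]
    have hle : N ≤ N * N := Nat.le_mul_of_pos_left N i.pos
    rw [hteq, Finset.offDiag_card]
    simp only [Finset.card_univ, Fintype.card_fin]
    push_cast [Nat.cast_sub hle]
    ring
  rw [hsum, ← htcard, ← mul_assoc,
    show (t.card : ℝ) * c = ((t.card * c : ℕ) : ℝ) by push_cast; ring, hcount]


lemma sum_perm_two_aux (N : ℕ) (i j : Fin N) (hij : i ≠ j) (f : Fin N → Fin N → ℝ) :
    ((N:ℝ) * (N:ℝ) - (N:ℝ)) * ∑ σ : Equiv.Perm (Fin N), f (σ i) (σ j)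
      = (Nat.factorial N : ℝ) * ∑ x : Fin N, ∑ y : Fin N, if x ≠ y then f x y else 0 :=
  sum_perm_two_aux' N i j hij f _ (fun x y hxy => card_fiber_pair_const N i j x y hij hxy)

lemma sum_perm_two (N : ℕ) (i j : Fin N) (hij : i ≠ j) (f : Fin N → Fin N → ℝ) :
    ∑ σ : Equiv.Perm (Fin N), f (σ i) (σ j)
      = ((N - 2).factorial : ℝ) * ∑ x : Fin N, ∑ y : Fin N, if x ≠ y then f x y else 0 := by
  classical
  have hN2 : 2 ≤ N := by
    by_contra h
    have hN1 : N = 0 ∨ N = 1 := by omega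
    rcases hN1 with h0 | h1
    · exact (h0 ▸ i).elim0
    · exact hij (by subst h1; exact Subsingleton.elim i j)
  have key : ((N:ℝ) * (N:ℝ) - (N:ℝ)) * ∑ σ : Equiv.Perm (Fin N), f (σ i) (σ j)
      = (Nat.factorial N : ℝ) * ∑ x : Fin N, ∑ y : Fin N, if x ≠ y then f x y else 0 :=
    sum_perm_two_aux N i j hij f
  have h1 : (N - 1) * (N - 2).factorial = (N - 1).factorial := by
    have : N - 2 = (N - 1) - 1 := by omega
    rw [this]
    exact Nat.mul_factorial_pred (by omega)
  have h2 : N * (N - 1).factorial = N.factorial := Nat.mul_factorial_pred (by omega)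
  have hfa : (N.factorial : ℝ) = (N : ℝ) * ((N:ℝ) - 1) * ((N - 2).factorial : ℝ) := by
    rw [← h2, ← h1]
    push_cast [Nat.cast_sub (by omega : 1 ≤ N)]
    ring
  have hne : (N:ℝ) * ((N:ℝ) - 1) ≠ 0 := by
    have : (2:ℝ) ≤ (N:ℝ) := by exact_mod_cast hN2
    nlinarith
  apply mul_left_cancel₀ hne
  rw [show (N:ℝ) * ((N:ℝ) - 1) = (N:ℝ) * (N:ℝ) - (N:ℝ) by ring, key, hfa]
  ring

lemma sum_ite_diag (M : ℕ) (a b : ℝ) :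
    ∑ i : Fin M, ∑ j : Fin M, (if i = j then a else b)
      = (M:ℝ) * a + (M:ℝ) * ((M:ℝ) - 1) * b := by
  have hrow : ∀ i : Fin M, ∑ j : Fin M, (if i = j then a else b) = a + ((M:ℝ) - 1) * b := by
    intro i
    have h1 : ∀ j : Fin M, (if i = j then a else b) = (if i = j then a - b else 0) + b := by
      intro j; split <;> ring
    rw [Finset.sum_congr rfl (fun j _ => h1 j), Finset.sum_add_distrib, Finset.sum_ite_eq,
      Finset.sum_const]
    simp only [Finset.mem_univ, if_true, Finset.card_univ, Fintype.card_fin, nsmul_eq_mul]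
    ring
  rw [Finset.sum_congr rfl (fun i _ => hrow i), Finset.sum_const]
  simp only [Finset.card_univ, Fintype.card_fin, nsmul_eq_mul]
  ring

/-- Average over random permutation conjugation of the normalized Frobenius norm of the
normalized `M × M` compression of a Hermitian tuple: exact identity and the resulting
bound `𝔼‖Π(σAσ⁻¹)‖² ≤ ‖A‖² + (N/M)‖diag A‖²`. -/
theorem expectation_perm_compression_norm
    (n N M : ℕ) (hM : 1 ≤ M) (hMN : M ≤ N)
    (A : Fin n → Matrix (Fin N) (Fin N) ℂ)
    (hA : ∀ k, (A k).IsHermitian) :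
    ((1 : ℝ) / (Nat.factorial N)) * (∑ σ : Equiv.Perm (Fin N),
        ((N : ℝ) / M) * ((1 : ℝ) / M) * ∑ k : Fin n, ∑ i : Fin M, ∑ j : Fin M,
          ‖A k (σ⁻¹ (Fin.castLE hMN i)) (σ⁻¹ (Fin.castLE hMN j))‖ ^ 2)
      = ((1 : ℝ) / N) * ((N : ℝ) * ((M : ℝ) - 1) / ((M : ℝ) * ((N : ℝ) - 1))) *
          (∑ k : Fin n, ∑ i : Fin N, ∑ j : Fin N, if i ≠ j then ‖A k i j‖ ^ 2 else 0)
        + ((1 : ℝ) / N) * ((N : ℝ) / M) * ∑ k : Fin n, ∑ i : Fin N, ‖A k i i‖ ^ 2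
    ∧ ((1 : ℝ) / (Nat.factorial N)) * (∑ σ : Equiv.Perm (Fin N),
        ((N : ℝ) / M) * ((1 : ℝ) / M) * ∑ k : Fin n, ∑ i : Fin M, ∑ j : Fin M,
          ‖A k (σ⁻¹ (Fin.castLE hMN i)) (σ⁻¹ (Fin.castLE hMN j))‖ ^ 2)
      ≤ ((1 : ℝ) / N) * (∑ k : Fin n, ∑ i : Fin N, ∑ j : Fin N, ‖A k i j‖ ^ 2)
        + ((N : ℝ) / M) *
          (((1 : ℝ) / N) * ∑ k : Fin n, ∑ i : Fin N, ‖A k i i‖ ^ 2) := by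
  classical
  have hN : 1 ≤ N := le_trans hM hMN
  set T : Fin n → ℝ := fun k => ∑ i : Fin N, ∑ j : Fin N, if i ≠ j then ‖A k i j‖ ^ 2 else 0
    with hTdef
  set D : Fin n → ℝ := fun k => ∑ i : Fin N, ‖A k i i‖ ^ 2 with hDdef
  -- evaluation of the inner permutation sum for each k
  have step_k : ∀ k : Fin n,
      (∑ σ : Equiv.Perm (Fin N), ∑ i : Fin M, ∑ j : Fin M,
        ‖A k (σ⁻¹ (Fin.castLE hMN i)) (σ⁻¹ (Fin.castLE hMN j))‖ ^ 2)
      = (M:ℝ) * ((N - 1).factorial : ℝ) * D k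
        + (M:ℝ) * ((M:ℝ) - 1) * ((N - 2).factorial : ℝ) * T k := by
    intro k
    have hinv : (∑ σ : Equiv.Perm (Fin N), ∑ i : Fin M, ∑ j : Fin M,
          ‖A k (σ⁻¹ (Fin.castLE hMN i)) (σ⁻¹ (Fin.castLE hMN j))‖ ^ 2)
        = ∑ σ : Equiv.Perm (Fin N), ∑ i : Fin M, ∑ j : Fin M,
          ‖A k (σ (Fin.castLE hMN i)) (σ (Fin.castLE hMN j))‖ ^ 2 :=
      Fintype.sum_equiv (Equiv.inv (Equiv.Perm (Fin N))) _ _ (fun σ => rfl)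
    rw [hinv, Finset.sum_comm]
    have hswap : ∀ i : Fin M,
        (∑ σ : Equiv.Perm (Fin N), ∑ j : Fin M,
          ‖A k (σ (Fin.castLE hMN i)) (σ (Fin.castLE hMN j))‖ ^ 2)
        = ∑ j : Fin M, ∑ σ : Equiv.Perm (Fin N),
          ‖A k (σ (Fin.castLE hMN i)) (σ (Fin.castLE hMN j))‖ ^ 2 :=
      fun i => Finset.sum_comm
    rw [Finset.sum_congr rfl (fun i _ => hswap i)]
    have hval : ∀ i j : Fin M,
        (∑ σ : Equiv.Perm (Fin N),
          ‖A k (σ (Fin.castLE hMN i)) (σ (Fin.castLE hMN j))‖ ^ 2)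
        = if i = j then ((N - 1).factorial : ℝ) * D k
          else ((N - 2).factorial : ℝ) * T k := by
      intro i j
      by_cases hij : i = j
      · subst hij
        simp only [if_true]
        exact sum_perm_one N (Fin.castLE hMN i) (fun x => ‖A k x x‖ ^ 2)
      · rw [if_neg hij]
        have hne : Fin.castLE hMN i ≠ Fin.castLE hMN j :=
          fun h => hij (Fin.castLE_injective hMN h)
        exact sum_perm_two N _ _ hne (fun x y => ‖A k x y‖ ^ 2)
    rw [Finset.sum_congr rfl (fun i _ => Finset.sum_congr rfl (fun j _ => hval i j))]
    rw [sum_ite_diag]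
    ring
  -- the sigma sum
  have key : (∑ σ : Equiv.Perm (Fin N),
        ((N : ℝ) / M) * ((1 : ℝ) / M) * ∑ k : Fin n, ∑ i : Fin M, ∑ j : Fin M,
          ‖A k (σ⁻¹ (Fin.castLE hMN i)) (σ⁻¹ (Fin.castLE hMN j))‖ ^ 2)
      = ((N : ℝ) / M) * ((1 : ℝ) / M) *
          (((M:ℝ) * ((N - 1).factorial : ℝ)) * (∑ k, D k)
            + ((M:ℝ) * ((M:ℝ) - 1) * ((N - 2).factorial : ℝ)) * (∑ k, T k)) := by
    rw [← Finset.mul_sum, Finset.sum_comm]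
    rw [Finset.sum_congr rfl (fun k _ => step_k k), Finset.sum_add_distrib,
      ← Finset.mul_sum, ← Finset.mul_sum]
  -- coefficient identities
  have hM0 : (M:ℝ) ≠ 0 := by positivity
  have hN0 : (N:ℝ) ≠ 0 := by
    have : (1:ℝ) ≤ (N:ℝ) := by exact_mod_cast hN
    linarith
  have hfac0 : (N.factorial : ℝ) ≠ 0 := by
    exact_mod_cast Nat.factorial_ne_zero N
  have hcD : ((1 : ℝ) / (Nat.factorial N)) * (((N : ℝ) / M) * ((1 : ℝ) / M) *
        ((M:ℝ) * ((N - 1).factorial : ℝ)))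
      = ((1 : ℝ) / N) * ((N : ℝ) / M) := by
    have hfa : (N.factorial : ℝ) = (N:ℝ) * ((N - 1).factorial : ℝ) := by
      rw [← Nat.mul_factorial_pred (by omega)]; push_cast; ring
    have h1 : ((N-1).factorial : ℝ) ≠ 0 := by exact_mod_cast Nat.factorial_ne_zero _
    rw [hfa]
    field_simp
  have hcT : ((1 : ℝ) / (Nat.factorial N)) * (((N : ℝ) / M) * ((1 : ℝ) / M) *
        ((M:ℝ) * ((M:ℝ) - 1) * ((N - 2).factorial : ℝ)))
      = ((1 : ℝ) / N) * ((N : ℝ) * ((M : ℝ) - 1) / ((M : ℝ) * ((N : ℝ) - 1))) := by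
    by_cases hN1 : N = 1
    · have hM1 : M = 1 := le_antisymm (hN1 ▸ hMN) hM
      subst hN1; subst hM1
      norm_num
    · have hN2 : 2 ≤ N := by omega
      have hfa : (N.factorial : ℝ) = (N : ℝ) * ((N:ℝ) - 1) * ((N - 2).factorial : ℝ) := by
        have h1 : (N - 1) * (N - 2).factorial = (N - 1).factorial := by
          have h : N - 2 = (N - 1) - 1 := by omega
          rw [h]; exact Nat.mul_factorial_pred (by omega)
        have h2 : N * (N - 1).factorial = N.factorial := Nat.mul_factorial_pred (by omega)
        rw [← h2, ← h1]
        push_cast [Nat.cast_sub (by omega : 1 ≤ N)]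
        ring
      have hN1' : (N:ℝ) - 1 ≠ 0 := by
        have : (2:ℝ) ≤ (N:ℝ) := by exact_mod_cast hN2
        linarith
      have h2 : ((N-2).factorial : ℝ) ≠ 0 := by exact_mod_cast Nat.factorial_ne_zero _
      rw [hfa]
      field_simp
  -- the identity
  have hid : ((1 : ℝ) / (Nat.factorial N)) * (∑ σ : Equiv.Perm (Fin N),
        ((N : ℝ) / M) * ((1 : ℝ) / M) * ∑ k : Fin n, ∑ i : Fin M, ∑ j : Fin M,
          ‖A k (σ⁻¹ (Fin.castLE hMN i)) (σ⁻¹ (Fin.castLE hMN j))‖ ^ 2)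
      = ((1 : ℝ) / N) * ((N : ℝ) * ((M : ℝ) - 1) / ((M : ℝ) * ((N : ℝ) - 1))) *
          (∑ k, T k) + ((1 : ℝ) / N) * ((N : ℝ) / M) * (∑ k, D k) := by
    rw [key]
    linear_combination (∑ k, D k) * hcD + (∑ k, T k) * hcT
  refine ⟨hid, ?_⟩
  rw [hid]
  -- the inequality
  have hT_nonneg : 0 ≤ ∑ k, T k := by
    apply Finset.sum_nonneg
    intro k _
    apply Finset.sum_nonneg
    intro i _
    apply Finset.sum_nonneg
    intro j _
    split
    · positivity
    · exact le_refl 0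
  have hle1 : ∑ k, T k ≤ ∑ k : Fin n, ∑ i : Fin N, ∑ j : Fin N, ‖A k i j‖ ^ 2 := by
    apply Finset.sum_le_sum
    intro k _
    apply Finset.sum_le_sum
    intro i _
    apply Finset.sum_le_sum
    intro j _
    split
    · exact le_refl _
    · positivity
  have hq : (N:ℝ) * ((M:ℝ) - 1) / ((M:ℝ) * ((N:ℝ) - 1)) ≤ 1 := by
    by_cases hN1 : N = 1
    · have hM1 : M = 1 := le_antisymm (hN1 ▸ hMN) hM
      subst hN1; subst hM1
      norm_num
    · have hN2 : 2 ≤ N := by omega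
      have hN2' : (2:ℝ) ≤ (N:ℝ) := by exact_mod_cast hN2
      have hM1' : (1:ℝ) ≤ (M:ℝ) := by exact_mod_cast hM
      have hMN' : (M:ℝ) ≤ (N:ℝ) := by exact_mod_cast hMN
      have hden : 0 < (M:ℝ) * ((N:ℝ) - 1) := by nlinarith
      rw [div_le_one hden]
      nlinarith
  have hNpos : (0:ℝ) < 1 / (N:ℝ) := by positivity
  have hαle : (1:ℝ) / N * ((N:ℝ) * ((M:ℝ) - 1) / ((M:ℝ) * ((N:ℝ) - 1))) ≤ 1 / (N:ℝ) := by
    calc (1:ℝ) / N * ((N:ℝ) * ((M:ℝ) - 1) / ((M:ℝ) * ((N:ℝ) - 1)))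
        ≤ 1 / (N:ℝ) * 1 := mul_le_mul_of_nonneg_left hq (le_of_lt hNpos)
      _ = 1 / (N:ℝ) := mul_one _
  have h1 : (1:ℝ) / N * ((N:ℝ) * ((M:ℝ) - 1) / ((M:ℝ) * ((N:ℝ) - 1))) * (∑ k, T k)
      ≤ 1 / (N:ℝ) * (∑ k, T k) := mul_le_mul_of_nonneg_right hαle hT_nonneg
  have h2 : (1:ℝ) / N * (∑ k, T k)
      ≤ 1 / (N:ℝ) * (∑ k : Fin n, ∑ i : Fin N, ∑ j : Fin N, ‖A k i j‖ ^ 2) :=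
    mul_le_mul_of_nonneg_left hle1 (le_of_lt hNpos)
  have h3 : (1:ℝ) / N * ((N:ℝ) / M) * (∑ k, D k) = (N:ℝ) / M * ((1:ℝ) / N * (∑ k, D k)) := by
    ring
  linarith
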